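/- For 0 < γ < 1, κ > 0 and t ∈ [0,1], one has ∫₀ᵗ (t-s)^(-γ) E_{1-γ}(κ s^(1-γ)) ds ≤ (Γ(1-γ)/κ) · E_{1-γ}(κ t^(1-γ)). -/

import Mathlib

open Real MeasureTheory

lemma gammaRatio {a x : ℝ} (ha0 : 0 < a) (ha1 : a < 1) (hx : 2 ≤ x) :
    Real.Gamma x * (x - 1) ^ a ≤ Real.Gamma (x + a) := by
  have hx1 : (0:ℝ) < x - 1 := by linarith
  have hx0 : (0:ℝ) < x := by linarith
  have hxa : (0:ℝ) < x + a := by linarith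
  have hG1 : 0 < Real.Gamma (x - 1) := Real.Gamma_pos_of_pos hx1
  have hGx : 0 < Real.Gamma x := Real.Gamma_pos_of_pos hx0
  have hGxa : 0 < Real.Gamma (x + a) := Real.Gamma_pos_of_pos hxa
  have hslope := Real.convexOn_log_Gamma.slope_mono_adjacent
    (show x - 1 ∈ Set.Ioi (0:ℝ) from hx1) (show x + a ∈ Set.Ioi (0:ℝ) from hxa)
    (show x - 1 < x by linarith) (show x < x + a by linarith)
  have hGrec : Real.Gamma x = (x - 1) * Real.Gamma (x - 1) := by
    have := Real.Gamma_add_one (s := x - 1) (by positivity)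
    simpa using this
  simp only [Function.comp_apply] at hslope
  have h1 : (Real.log (Real.Gamma x) - Real.log (Real.Gamma (x-1))) / (x - (x-1))
      = Real.log (x - 1) := by
    rw [hGrec, Real.log_mul (by positivity) (by positivity)]
    ring
  rw [h1] at hslope
  have h2 : a * Real.log (x - 1) ≤ Real.log (Real.Gamma (x + a)) - Real.log (Real.Gamma x) := by
    have hd : x + a - x = a := by ring
    rw [hd] at hslope
    calc a * Real.log (x-1) = Real.log (x-1) * a := by ring
    _ ≤ ((Real.log (Real.Gamma (x + a)) - Real.log (Real.Gamma x)) / a) * a := by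
        exact mul_le_mul_of_nonneg_right hslope ha0.le
    _ = _ := by field_simp
  have h3 : Real.log (Real.Gamma x * (x-1)^a) ≤ Real.log (Real.Gamma (x + a)) := by
    rw [Real.log_mul (by positivity) (by positivity), Real.log_rpow hx1]
    linarith
  exact (Real.log_le_log_iff (by positivity) hGxa).mp h3

lemma summable_ml {a κ : ℝ} (ha0 : 0 < a) (ha1 : a < 1) (hκ : 0 < κ) :
    Summable (fun k : ℕ => κ ^ k / Real.Gamma (a * k + 1)) := by
  apply summable_of_ratio_norm_eventually_le (r := 1/2) (by norm_num)
  have htend : Filter.Tendsto (fun k : ℕ => a * (k:ℝ)) Filter.atTop Filter.atTop := by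
    exact tendsto_natCast_atTop_atTop.const_mul_atTop ha0
  set M : ℝ := max 1 (2 * κ) with hM
  have hM1 : (1:ℝ) ≤ M := le_max_left _ _
  filter_upwards [htend.eventually_ge_atTop (max 1 (M ^ (1/a)))] with k hk
  have hak1 : (1:ℝ) ≤ a * k := le_trans (le_max_left _ _) hk
  have hGpos : 0 < Real.Gamma (a * k + 1) := Real.Gamma_pos_of_pos (by linarith)
  have hpow : M ≤ (a * k) ^ a := by
    calc M = (M ^ (1/a)) ^ a := by
          rw [← Real.rpow_mul (by linarith), one_div, inv_mul_cancel₀ ha0.ne', Real.rpow_one]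
    _ ≤ (a * k) ^ a := Real.rpow_le_rpow (Real.rpow_nonneg (by linarith) _)
          (le_trans (le_max_right _ _) hk) ha0.le
  have hGratio : Real.Gamma (a * k + 1) * (2 * κ) ≤ Real.Gamma (a * (k+1) + 1) := by
    have := gammaRatio ha0 ha1 (x := a * k + 1) (by linarith)
    have he : a * (k:ℝ) + 1 + a = a * ((k:ℝ) + 1) + 1 := by ring
    have h2κ : Real.Gamma (a*k+1) * (2*κ) ≤ Real.Gamma (a*k+1) * (a*k+1-1) ^ a := by
      apply mul_le_mul_of_nonneg_left _ hGpos.le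
      have : a * (k:ℝ) + 1 - 1 = a * k := by ring
      rw [this]
      exact le_trans (le_max_right _ _) hpow
    calc Real.Gamma (a*k+1) * (2*κ) ≤ Real.Gamma (a*k+1) * (a*k+1-1) ^ a := h2κ
    _ ≤ Real.Gamma (a*k+1+a) := this
    _ = Real.Gamma (a * ((k:ℝ)+1) + 1) := by rw [he]
  have hGpos' : 0 < Real.Gamma (a * ((k:ℕ)+1 : ℕ) + 1) := Real.Gamma_pos_of_pos (by positivity)
  have hnn : ∀ j : ℕ, 0 ≤ κ ^ j / Real.Gamma (a * j + 1) := fun j =>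
    div_nonneg (by positivity) (Real.Gamma_pos_of_pos (by positivity)).le
  rw [Real.norm_of_nonneg (hnn _), Real.norm_of_nonneg (hnn _)]
  have hG2 : 0 < Real.Gamma (a * ((k:ℝ)+1) + 1) := by
    apply Real.Gamma_pos_of_pos; positivity
  push_cast
  rw [div_le_iff₀ hG2]
  calc κ ^ (k+1) = (κ ^ k / Real.Gamma (a*k+1)) * (Real.Gamma (a*k+1) * (2*κ)) * (1/2) := by
        field_simp; ring
  _ ≤ (κ ^ k / Real.Gamma (a*k+1)) * Real.Gamma (a * ((k:ℝ)+1) + 1) * (1/2) := by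
        apply mul_le_mul_of_nonneg_right _ (by norm_num)
        exact mul_le_mul_of_nonneg_left hGratio (by positivity)
  _ = 1/2 * (κ ^ k / Real.Gamma (a * k + 1)) * Real.Gamma (a * ((k:ℝ)+1) + 1) := by ring

section
variable {p q b t γ : ℝ}

lemma betaReal_eqOn : ∀ x ∈ Set.uIcc (0:ℝ) 1,
    ((fun x : ℝ => ((x:ℂ) ^ ((p:ℂ) - 1) * ((1:ℂ) - (x:ℂ)) ^ ((q:ℂ) - 1))) x)
      = ((x ^ (p-1) * (1-x) ^ (q-1) : ℝ) : ℂ) := by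
  intro x hx
  rw [Set.uIcc_of_le (by norm_num : (0:ℝ) ≤ 1)] at hx
  have hx0 : (0:ℝ) ≤ x := hx.1
  have hx1 : (0:ℝ) ≤ 1 - x := by linarith [hx.2]
  have e1 : (p:ℂ) - 1 = ((p-1:ℝ):ℂ) := by push_cast; ring
  have e2 : (q:ℂ) - 1 = ((q-1:ℝ):ℂ) := by push_cast; ring
  have e3 : (1:ℂ) - (x:ℂ) = ((1-x:ℝ):ℂ) := by push_cast; ring
  simp only [e1, e2, e3, ← Complex.ofReal_cpow hx0, ← Complex.ofReal_cpow hx1]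
  push_cast
  ring

lemma betaReal_integrable (hp : 0 < p) (hq : 0 < q) :
    IntervalIntegrable (fun x : ℝ => x ^ (p-1) * (1-x) ^ (q-1)) volume 0 1 := by
  have h := Complex.betaIntegral_convergent (u := (p:ℂ)) (v := (q:ℂ)) (by simpa) (by simpa)
  constructor
  · have h1 : IntegrableOn
        (fun x : ℝ => (((x:ℂ) ^ ((p:ℂ) - 1) * ((1:ℂ) - (x:ℂ)) ^ ((q:ℂ) - 1)).re))
        (Set.Ioc (0:ℝ) 1) volume := h.1.re
    apply h1.congr_fun _ measurableSet_Ioc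
    intro x hx
    have hx' : x ∈ Set.uIcc (0:ℝ) 1 := by
      rw [Set.uIcc_of_le (by norm_num : (0:ℝ) ≤ 1)]
      exact Set.Ioc_subset_Icc_self hx
    have := betaReal_eqOn (p := p) (q := q) x hx'
    simp only at this
    simp only [this, Complex.ofReal_re]
  · rw [Set.Ioc_eq_empty (by norm_num : ¬ (1:ℝ) < 0)]
    exact integrableOn_empty

lemma betaReal (hp : 0 < p) (hq : 0 < q) :
    ∫ x in (0:ℝ)..1, x ^ (p-1) * (1-x) ^ (q-1)
      = Real.Gamma p * Real.Gamma q / Real.Gamma (p+q) := by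
  have h := Complex.Gamma_mul_Gamma_eq_betaIntegral
    (s := (p:ℂ)) (t := (q:ℂ)) (by simpa) (by simpa)
  rw [Complex.betaIntegral] at h
  rw [intervalIntegral.integral_congr betaReal_eqOn] at h
  rw [intervalIntegral.integral_ofReal] at h
  rw [← Complex.ofReal_add, Complex.Gamma_ofReal, Complex.Gamma_ofReal,
    Complex.Gamma_ofReal, ← Complex.ofReal_mul, ← Complex.ofReal_mul] at h
  have h' := Complex.ofReal_injective h
  have hGpq : Real.Gamma (p+q) ≠ 0 := (Real.Gamma_pos_of_pos (by linarith)).ne'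
  field_simp [hGpq] at h' ⊢
  linarith [h']

lemma scaled_eqOn (hb : 0 ≤ b) (ht : 0 < t) : ∀ x ∈ Set.uIcc (0:ℝ) 1,
    (t - x*t) ^ (-γ) * (x*t) ^ b
      = t ^ (b-γ) * (x ^ ((b+1)-1) * (1-x) ^ ((1-γ)-1)) := by
  intro x hx
  rw [Set.uIcc_of_le (by norm_num : (0:ℝ) ≤ 1)] at hx
  have h1 : t - x*t = t * (1-x) := by ring
  rw [h1, Real.mul_rpow ht.le (by linarith [hx.2]), mul_comm x t,
    Real.mul_rpow ht.le hx.1]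
  rw [show (b+1)-1 = b by ring, show (1-γ)-1 = -γ by ring]
  have h2 : t ^ (b-γ) = t^b * t^(-γ) := by
    rw [show b-γ = b + (-γ) by ring, Real.rpow_add ht]
  rw [h2]; ring

lemma lemD_integrable (hb : 0 ≤ b) (ht : 0 < t) (hγ0 : 0 < γ) (hγ1 : γ < 1) :
    IntegrableOn (fun s => (t - s) ^ (-γ) * s ^ b) (Set.Ioc 0 t) volume := by
  have hbeta := betaReal_integrable (p := b+1) (q := 1-γ) (by linarith) (by linarith)
  have hg : IntervalIntegrable (fun x : ℝ => (t - x*t) ^ (-γ) * (x*t) ^ b) volume 0 1 := by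
    constructor
    · have hIO : IntegrableOn
          (fun x : ℝ => t ^ (b-γ) * (x ^ ((b+1)-1) * (1-x) ^ ((1-γ)-1)))
          (Set.Ioc (0:ℝ) 1) volume := hbeta.1.const_mul _
      apply hIO.congr_fun _ measurableSet_Ioc
      intro x hx
      have hx' : x ∈ Set.uIcc (0:ℝ) 1 := by
        rw [Set.uIcc_of_le (by norm_num : (0:ℝ) ≤ 1)]
        exact Set.Ioc_subset_Icc_self hx
      exact (scaled_eqOn hb ht x hx').symm
    · rw [Set.Ioc_eq_empty (by norm_num : ¬ (1:ℝ) < 0)]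
      exact integrableOn_empty
  have h2 := hg.comp_mul_right (c := t⁻¹)
  have e : (fun x => (t - (x * t⁻¹)*t) ^ (-γ) * ((x * t⁻¹)*t) ^ b)
      = (fun s => (t - s) ^ (-γ) * s ^ b) := by
    funext x; rw [mul_assoc, inv_mul_cancel₀ ht.ne', mul_one]
  rw [e] at h2
  have e2 : (0:ℝ) / t⁻¹ = 0 := by simp
  have e3 : (1:ℝ) / t⁻¹ = t := by field_simp
  rw [e2, e3] at h2
  exact h2.1

lemma lemD (hb : 0 ≤ b) (ht : 0 < t) (hγ0 : 0 < γ) (hγ1 : γ < 1) :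
    ∫ s in (0:ℝ)..t, (t - s) ^ (-γ) * s ^ b
      = t ^ (b + 1 - γ) * (Real.Gamma (b+1) * Real.Gamma (1-γ) / Real.Gamma (b+1+(1-γ))) := by
  have hcomp := intervalIntegral.integral_comp_mul_right (a := 0) (b := 1)
    (fun s => (t - s) ^ (-γ) * s ^ b) ht.ne'
  rw [zero_mul, one_mul] at hcomp
  have hcongr : ∫ x in (0:ℝ)..1, (t - x*t) ^ (-γ) * (x*t) ^ b
      = t ^ (b-γ) * (Real.Gamma (b+1) * Real.Gamma (1-γ) / Real.Gamma (b+1+(1-γ))) := by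
    rw [intervalIntegral.integral_congr (scaled_eqOn hb ht),
      intervalIntegral.integral_const_mul, betaReal (by linarith) (by linarith)]
  rw [hcongr] at hcomp
  simp only [smul_eq_mul] at hcomp
  have : (∫ s in (0:ℝ)..t, (t - s) ^ (-γ) * s ^ b)
      = t * (t ^ (b-γ) * (Real.Gamma (b+1) * Real.Gamma (1-γ) / Real.Gamma (b+1+(1-γ)))) := by
    rw [hcomp, ← mul_assoc, mul_inv_cancel₀ ht.ne', one_mul]
  rw [this, ← mul_assoc, show t * t^(b-γ) = t^(b+1-γ) by
    rw [show b+1-γ = 1 + (b-γ) by ring, Real.rpow_add ht, Real.rpow_one]]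
end

lemma ofReal_tsum_le {g : ℕ → ℝ} (h0 : ∀ k, 0 ≤ g k) :
    ENNReal.ofReal (∑' k, g k) ≤ ∑' k, ENNReal.ofReal (g k) := by
  by_cases hs : Summable g
  · rw [ENNReal.ofReal_tsum_of_nonneg h0 hs]
  · rw [tsum_eq_zero_of_not_summable hs]; simp

/-- The Mittag-Leffler function `E_a(x) = ∑_{k≥0} x^k / Γ(a k + 1)`. -/
noncomputable def mittagLeffler (a x : ℝ) : ℝ := ∑' k : ℕ, x ^ k / Real.Gamma (a * k + 1)

theorem stmt_6 (γ κ t : ℝ) (hγ0 : 0 < γ) (hγ1 : γ < 1) (hκ : 0 < κ)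
    (ht : t ∈ Set.Icc (0:ℝ) 1) :
    ∫ s in (0:ℝ)..t, (t - s) ^ (-γ) * mittagLeffler (1 - γ) (κ * s ^ (1 - γ))
      ≤ (Real.Gamma (1 - γ) / κ) * mittagLeffler (1 - γ) (κ * t ^ (1 - γ)) := by
  have ha0 : 0 < 1 - γ := by linarith
  set a := 1 - γ with ha
  obtain ⟨ht0, ht1⟩ := ht
  have hΓa : 0 < Real.Gamma a := Real.Gamma_pos_of_pos ha0
  have hGpos : ∀ k : ℕ, 0 < Real.Gamma (a * k + 1) :=
    fun k => Real.Gamma_pos_of_pos (by positivity)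
  have hMLnn : ∀ x : ℝ, 0 ≤ x → 0 ≤ mittagLeffler a x := by
    intro x hx
    apply tsum_nonneg
    intro k
    exact div_nonneg (pow_nonneg hx k) (hGpos k).le
  have hRHSnn : 0 ≤ Real.Gamma a / κ * mittagLeffler a (κ * t ^ a) :=
    mul_nonneg (div_nonneg hΓa.le hκ.le) (hMLnn _ (by positivity))
  rcases eq_or_lt_of_le ht0 with h0 | ht0'
  · rw [← h0] at hRHSnn ⊢
    rw [intervalIntegral.integral_same]
    exact hRHSnn
  by_cases hInt : IntervalIntegrable
      (fun s => (t - s) ^ (-γ) * mittagLeffler a (κ * s ^ a)) volume 0 t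
  swap
  · rw [intervalIntegral.integral_undef hInt]; exact hRHSnn
  -- definitions
  set g : ℕ → ℝ := fun j => κ ^ j * t ^ (a * j) / Real.Gamma (a * j + 1) with hgdef
  set f : ℕ → ℝ → ℝ :=
    fun k s => κ ^ k / Real.Gamma (a * k + 1) * ((t - s) ^ (-γ) * s ^ (a * k)) with hfdef
  set u : ℕ → ℝ := fun k => Real.Gamma a / κ * g (k+1) with hudef
  have hgnn : ∀ j, 0 ≤ g j := fun j =>
    div_nonneg (mul_nonneg (by positivity) (Real.rpow_nonneg ht0 _)) (hGpos j).le
  have hsg : Summable g := by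
    refine Summable.of_nonneg_of_le hgnn (fun j => ?_) (summable_ml ha0 (by linarith) hκ)
    show g j ≤ κ ^ j / Real.Gamma (a * j + 1)
    have h1 : κ ^ j * t ^ (a * (j:ℕ)) ≤ κ ^ j := by
      nth_rewrite 2 [← mul_one (κ ^ j)]
      exact mul_le_mul_of_nonneg_left
        (Real.rpow_le_one ht0 ht1 (by positivity)) (by positivity)
    show κ ^ j * t ^ (a * (j:ℕ)) / Real.Gamma (a * j + 1) ≤ κ ^ j / Real.Gamma (a * j + 1)
    gcongr
  have hsg' : Summable (fun k => g (k+1)) := (summable_nat_add_iff 1).mpr hsg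
  have husum : Summable u := hsg'.mul_left _
  have hunn : ∀ k, 0 ≤ u k := fun k => mul_nonneg (div_nonneg hΓa.le hκ.le) (hgnn _)
  have hMLt : mittagLeffler a (κ * t ^ a) = ∑' j, g j := by
    rw [mittagLeffler]
    apply tsum_congr; intro j
    have e : (κ * t ^ a) ^ j = κ ^ j * t ^ (a * j) := by
      rw [mul_pow, ← Real.rpow_natCast (t ^ a) j, ← Real.rpow_mul ht0]
    rw [e, hgdef]
  -- sum of u is at most RHS
  have hsum_le : ∑' k, u k ≤ Real.Gamma a / κ * mittagLeffler a (κ * t ^ a) := by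
    rw [hudef, tsum_mul_left, hMLt]
    apply mul_le_mul_of_nonneg_left _ (div_nonneg hΓa.le hκ.le)
    have h0add := hsg.tsum_eq_zero_add
    have := hgnn 0
    linarith
  -- per-k integral value
  have hker : ∀ k : ℕ, ∫⁻ s in Set.Ioc (0:ℝ) t, ENNReal.ofReal (f k s)
      = ENNReal.ofReal (u k) := by
    intro k
    have hak : (0:ℝ) ≤ a * k := by positivity
    have hIk : IntegrableOn (f k) (Set.Ioc 0 t) volume := by
      rw [hfdef]
      exact (lemD_integrable hak ht0' hγ0 hγ1).const_mul _
    have hknn : 0 ≤ᵐ[volume.restrict (Set.Ioc (0:ℝ) t)] f k := by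
      refine Filter.Eventually.mono (ae_restrict_mem measurableSet_Ioc) ?_
      intro s hs
      rw [hfdef]
      exact mul_nonneg (div_nonneg (by positivity) (hGpos k).le)
        (mul_nonneg (Real.rpow_nonneg (by linarith [hs.2]) _)
          (Real.rpow_nonneg hs.1.le _))
    rw [← ofReal_integral_eq_lintegral_ofReal hIk hknn]
    congr 1
    have hval : ∫ s in (0:ℝ)..t, f k s
        = κ ^ k / Real.Gamma (a * k + 1) * (t ^ (a * k + 1 - γ)
          * (Real.Gamma (a * k + 1) * Real.Gamma (1-γ) / Real.Gamma (a * k + 1 + (1-γ)))) := by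
      rw [hfdef]
      rw [intervalIntegral.integral_const_mul, lemD hak ht0' hγ0 hγ1]
    rw [← intervalIntegral.integral_of_le ht0, hval, hudef, hgdef]
    simp only
    have e1 : a * (k:ℝ) + 1 - γ = a * ((k:ℕ)+1 : ℕ) := by push_cast; rw [ha]; ring
    have e2 : a * (k:ℝ) + 1 + (1-γ) = a * ((k:ℕ)+1 : ℕ) + 1 := by push_cast; rw [ha]; ring
    have e3 : (1:ℝ) - γ = a := ha.symm
    rw [e1, e2, e3]
    have hGk1 : Real.Gamma (a * ((k:ℕ)+1 : ℕ) + 1) ≠ 0 := (hGpos (k+1)).ne'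
    field_simp
    ring
  -- measurability
  have hmeas : ∀ k : ℕ, AEMeasurable (fun s => ENNReal.ofReal (f k s))
      (volume.restrict (Set.Ioc (0:ℝ) t)) := by
    intro k
    rw [hfdef]
    apply Measurable.aemeasurable
    apply Measurable.ennreal_ofReal
    fun_prop
  -- pointwise bound
  have hpt : ∀ s ∈ Set.Ioc (0:ℝ) t,
      ENNReal.ofReal ((t - s) ^ (-γ) * mittagLeffler a (κ * s ^ a))
        ≤ ∑' k, ENNReal.ofReal (f k s) := by
    intro s hs
    have hs0 : 0 < s := hs.1
    have hrnn : 0 ≤ (t - s) ^ (-γ) := Real.rpow_nonneg (by linarith [hs.2]) _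
    have htermnn : ∀ k : ℕ, 0 ≤ κ ^ k / Real.Gamma (a * k + 1) * s ^ (a * k) :=
      fun k => mul_nonneg (div_nonneg (by positivity) (hGpos k).le)
        (Real.rpow_nonneg hs0.le _)
    have hML : mittagLeffler a (κ * s ^ a)
        = ∑' k : ℕ, κ ^ k / Real.Gamma (a * k + 1) * s ^ (a * k) := by
      rw [mittagLeffler]
      apply tsum_congr; intro k
      have e : (κ * s ^ a) ^ k = κ ^ k * s ^ (a * k) := by
        rw [mul_pow, ← Real.rpow_natCast (s ^ a) k, ← Real.rpow_mul hs0.le]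
      rw [e]; ring
    calc ENNReal.ofReal ((t - s) ^ (-γ) * mittagLeffler a (κ * s ^ a))
        = ENNReal.ofReal ((t - s) ^ (-γ))
          * ENNReal.ofReal (∑' k : ℕ, κ ^ k / Real.Gamma (a * k + 1) * s ^ (a * k)) := by
          rw [hML, ENNReal.ofReal_mul hrnn]
      _ ≤ ENNReal.ofReal ((t - s) ^ (-γ))
          * ∑' k : ℕ, ENNReal.ofReal (κ ^ k / Real.Gamma (a * k + 1) * s ^ (a * k)) :=
          mul_le_mul_right (ofReal_tsum_le htermnn) _
      _ = ∑' k : ℕ, ENNReal.ofReal ((t - s) ^ (-γ))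
          * ENNReal.ofReal (κ ^ k / Real.Gamma (a * k + 1) * s ^ (a * k)) :=
          ENNReal.tsum_mul_left.symm
      _ = ∑' k, ENNReal.ofReal (f k s) := by
          apply tsum_congr; intro k
          rw [← ENNReal.ofReal_mul hrnn]
          congr 1
          rw [hfdef]
          ring
  -- nonnegativity of F a.e.
  have hFnn : 0 ≤ᵐ[volume.restrict (Set.Ioc (0:ℝ) t)]
      (fun s => (t - s) ^ (-γ) * mittagLeffler a (κ * s ^ a)) := by
    refine Filter.Eventually.mono (ae_restrict_mem measurableSet_Ioc) ?_
    intro s hs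
    exact mul_nonneg (Real.rpow_nonneg (by linarith [hs.2]) _)
      (hMLnn _ (mul_nonneg hκ.le (Real.rpow_nonneg hs.1.le _)))
  -- the main chain
  have key : ENNReal.ofReal
      (∫ s in (0:ℝ)..t, (t - s) ^ (-γ) * mittagLeffler a (κ * s ^ a))
      ≤ ENNReal.ofReal (Real.Gamma a / κ * mittagLeffler a (κ * t ^ a)) := by
    rw [intervalIntegral.integral_of_le ht0]
    calc ENNReal.ofReal (∫ s in Set.Ioc (0:ℝ) t,
          (t - s) ^ (-γ) * mittagLeffler a (κ * s ^ a))
        = ∫⁻ s in Set.Ioc (0:ℝ) t,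
            ENNReal.ofReal ((t - s) ^ (-γ) * mittagLeffler a (κ * s ^ a)) :=
          ofReal_integral_eq_lintegral_ofReal hInt.1 hFnn
      _ ≤ ∫⁻ s in Set.Ioc (0:ℝ) t, ∑' k, ENNReal.ofReal (f k s) := by
          apply lintegral_mono_ae
          exact Filter.Eventually.mono (ae_restrict_mem measurableSet_Ioc) hpt
      _ = ∑' k, ∫⁻ s in Set.Ioc (0:ℝ) t, ENNReal.ofReal (f k s) :=
          lintegral_tsum hmeas
      _ = ∑' k, ENNReal.ofReal (u k) := tsum_congr hker
      _ = ENNReal.ofReal (∑' k, u k) := (ENNReal.ofReal_tsum_of_nonneg hunn husum).symm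
      _ ≤ ENNReal.ofReal (Real.Gamma a / κ * mittagLeffler a (κ * t ^ a)) :=
          ENNReal.ofReal_le_ofReal hsum_le
  exact (ENNReal.ofReal_le_ofReal_iff hRHSnn).mp key
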